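/- For a subgroup H of Aff(F_q) of type (d, k), the multiplicity ⟨ρ_H, θ⟩ of the degree-(q−1) irreducible character θ in the permutation character ρ_H = Ind_H^G(1) equals (p^{n−k} − 1)/d. -/

import Mathlib

variable {F : Type*} [Field F]

/-- The affine permutation `x ↦ a * x + b` of a field `F`. -/
def affinePerm (a : Fˣ) (b : F) : Equiv.Perm F :=
  (Equiv.mulLeft₀ (a : F) a.ne_zero).trans (Equiv.addRight b)

@[simp] lemma affinePerm_apply (a : Fˣ) (b x : F) : affinePerm a b x = a * x + b := rfl

/-- The one-dimensional affine group over `F`, as a subgroup of the permutation group. -/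
def Aff (F : Type*) [Field F] : Subgroup (Equiv.Perm F) where
  carrier := {g | ∃ (a : Fˣ) (b : F), g = affinePerm a b}
  one_mem' := ⟨1, 0, by ext x; simp⟩
  mul_mem' := by
    rintro f g ⟨a, b, rfl⟩ ⟨c, d, rfl⟩
    exact ⟨a * c, a * d + b, by ext x; simp [mul_add, mul_assoc, add_assoc]⟩
  inv_mem' := by
    rintro f ⟨a, b, rfl⟩
    refine ⟨a⁻¹, -(((a⁻¹ : Fˣ) : F) * b), inv_eq_iff_mul_eq_one.mpr ?_⟩
    ext x
    simp [mul_add, mul_assoc]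

/-- The subgroup `V ⋊ Λ_d` of `Aff F`, as a set of permutations. -/
def affSub {F : Type*} [Field F] (V : AddSubgroup F) (d : ℕ) : Set (Equiv.Perm F) :=
  {h : Equiv.Perm F | ∃ (a : Fˣ) (b : F), h = affinePerm a b ∧ a ^ d = 1 ∧ b ∈ V}

lemma card_dth_roots (F : Type*) [Field F] [Fintype F] [DecidableEq F]
    (d : ℕ) (hd0 : 0 < d) (hd : d ∣ Fintype.card F - 1) :
    Fintype.card {a : Fˣ // a ^ d = 1} = d := by
  haveI : NeZero d := ⟨hd0.ne'⟩
  obtain ⟨g, hg⟩ := IsCyclic.exists_ofOrder_eq_natCard (α := Fˣ)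
  set m := Fintype.card F - 1 with hm
  have hm0 : 0 < m := by
    have : 1 < Fintype.card F := Fintype.one_lt_card
    omega
  have hgm : orderOf g = m := by
    rw [hg, Nat.card_eq_fintype_card, Fintype.card_units]
  have hζ : orderOf (g ^ (m / d)) = d := by
    rw [orderOf_pow, hgm, Nat.gcd_eq_right (Nat.div_dvd_of_dvd hd),
      Nat.div_div_self hd hm0.ne']
  have hprim : IsPrimitiveRoot (g ^ (m / d)) d := by
    have h := IsPrimitiveRoot.orderOf (g ^ (m / d))
    rwa [hζ] at h
  calc Fintype.card {a : Fˣ // a ^ d = 1}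
      = Nat.card (rootsOfUnity d F) := by
        rw [← Nat.card_eq_fintype_card]
        exact Nat.card_congr (Equiv.subtypeEquivRight fun a => (mem_rootsOfUnity d a).symm)
    _ = d := hprim.card_rootsOfUnity'

open Finset in
/-- For a subgroup `H = V ⋊ Λ_d` of type `(d, k)` of `Aff F`, the multiplicity
`⟨ρ_H, θ⟩ = (1/|H|) ∑_{h ∈ H} θ(h)` of the degree-`(q-1)` irreducible character
`θ(g) = |Fix(g)| - 1` in the permutation character `ρ_H = Ind_H^G 1` equals
`(p^(n-k) - 1)/d`. -/
theorem multiplicity_theta (p n : ℕ) (hp : p.Prime) (hn : 0 < n)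
    (F : Type*) [Field F] [Fintype F] [DecidableEq F] (hF : Fintype.card F = p ^ n)
    (d k : ℕ) (hd : d ∣ Fintype.card F - 1) (hd0 : 0 < d)
    (V : AddSubgroup F) (hVcard : Nat.card V = p ^ k)
    (hV : ∀ a : Fˣ, a ^ d = 1 → ∀ x ∈ V, (a : F) * x ∈ V) :
    (Nat.card (affSub V d) : ℚ)⁻¹ *
      ∑ g ∈ (Set.toFinite (affSub V d)).toFinset,
        ((Fintype.card {x : F // g x = x} : ℚ) - 1) =
    ((p : ℚ) ^ (n - k) - 1) / d := by
  classical
  haveI : Fintype V := Fintype.ofFinite V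
  have hkn : k ≤ n := by
    have h1 : Nat.card V ≤ Nat.card F := Nat.card_le_card_of_injective _ Subtype.val_injective
    rw [hVcard, Nat.card_eq_fintype_card, hF] at h1
    exact (Nat.pow_le_pow_iff_right hp.one_lt).mp h1
  set φ : {a : Fˣ // a ^ d = 1} × V → Equiv.Perm F :=
    fun z => affinePerm z.1.1 z.2.1 with hφ
  have hinj : Function.Injective φ := by
    rintro ⟨⟨a, ha⟩, ⟨b, hb⟩⟩ ⟨⟨a', ha'⟩, ⟨b', hb'⟩⟩ h
    simp only [hφ] at h
    have h0 := congrArg (fun g : Equiv.Perm F => g 0) h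
    have h1 := congrArg (fun g : Equiv.Perm F => g 1) h
    simp only [affinePerm_apply, mul_zero, zero_add, mul_one] at h0 h1
    have hab : (a : F) = a' := by rw [h0] at h1; exact add_right_cancel h1
    ext
    · exact hab
    · exact h0
  have hrange : affSub V d = Set.range φ := by
    ext g
    constructor
    · rintro ⟨a, b, rfl, ha, hb⟩
      exact ⟨⟨⟨a, ha⟩, ⟨b, hb⟩⟩, rfl⟩
    · rintro ⟨⟨⟨a, ha⟩, ⟨b, hb⟩⟩, rfl⟩
      exact ⟨a, b, rfl, ha, hb⟩
  -- cardinality of H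
  have hcard : Nat.card (affSub V d) = d * p ^ k := by
    rw [hrange, Nat.card_range_of_injective hinj, Nat.card_prod,
      Nat.card_eq_fintype_card, card_dth_roots F d hd0 hd, hVcard]
  -- the finset is the image of φ
  have hfin : (Set.toFinite (affSub V d)).toFinset = Finset.univ.image φ := by
    ext g
    simp [Set.Finite.mem_toFinset, hrange, Set.mem_range, eq_comm]
  -- value of each term
  have key : ∀ (a : Fˣ) (b : F), ((Fintype.card {x : F // affinePerm a b x = x} : ℚ) - 1)
      = if a = 1 then (if b = 0 then ((Fintype.card F : ℕ) : ℚ) - 1 else -1) else 0 := by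
    intro a b
    by_cases ha : a = 1
    · subst ha
      have hiff : ∀ x : F, affinePerm 1 b x = x ↔ b = 0 := by
        intro x
        simp [add_comm]
      by_cases hb : b = 0
      · have : Fintype.card {x : F // affinePerm 1 b x = x} = Fintype.card F :=
          Fintype.card_congr (Equiv.subtypeUnivEquiv fun x => (hiff x).mpr hb)
        rw [this]
        simp [hb]
      · have : Fintype.card {x : F // affinePerm 1 b x = x} = 0 :=
          Fintype.card_eq_zero_iff.mpr ⟨fun x => hb ((hiff x.1).mp x.2)⟩
        rw [this]
        simp [hb]
    · have ha' : (1 : F) - (a : F) ≠ 0 := by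
        rw [sub_ne_zero]
        exact fun h => ha (Units.ext h.symm)
      have hiff : ∀ x : F, affinePerm a b x = x ↔ x = (1 - (a : F))⁻¹ * b := by
        intro x
        constructor
        · intro h
          simp only [affinePerm_apply] at h
          have h2 : (1 - (a : F)) * x = b := by linear_combination -h
          rw [← h2, inv_mul_cancel_left₀ ha']
        · rintro rfl
          simp only [affinePerm_apply]
          field_simp
          ring
      have : Fintype.card {x : F // affinePerm a b x = x} = 1 := by
        rw [Fintype.card_congr (Equiv.subtypeEquivRight hiff)]
        exact Fintype.card_subtype_eq _
      rw [this]
      simp [ha]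
  -- compute the sum
  have hsum : ∑ g ∈ (Set.toFinite (affSub V d)).toFinset,
      ((Fintype.card {x : F // g x = x} : ℚ) - 1) = ((Fintype.card F : ℕ) : ℚ) - p ^ k := by
    rw [hfin, Finset.sum_image (fun x _ y _ h => hinj h)]
    have : ∀ z : {a : Fˣ // a ^ d = 1} × V,
        ((Fintype.card {x : F // φ z x = x} : ℚ) - 1)
        = if z.1 = (⟨1, one_pow d⟩ : {a : Fˣ // a ^ d = 1}) then
            (if z.2 = 0 then ((Fintype.card F : ℕ) : ℚ) - 1 else -1) else 0 := by
      rintro ⟨⟨a, ha⟩, b⟩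
      rw [key a b]
      congr 1
      · simp [Subtype.ext_iff]
      · congr 1
        simp [ZeroMemClass.coe_eq_zero]
    rw [Finset.sum_congr rfl fun z _ => this z, Fintype.sum_prod_type]
    have hS : ∑ b : V, (if b = 0 then ((Fintype.card F : ℕ) : ℚ) - 1 else -1) = ((Fintype.card F : ℕ) : ℚ) - p ^ k := by
      have h1 : ∀ b : V, (if b = 0 then ((Fintype.card F : ℕ) : ℚ) - 1 else -1)
          = (if b = (0 : V) then ((Fintype.card F : ℕ) : ℚ) else 0) - 1 := by
        intro b; split_ifs <;> ring
      rw [Finset.sum_congr rfl fun b _ => h1 b, Finset.sum_sub_distrib]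
      simp [Finset.card_univ, ← Nat.card_eq_fintype_card, hVcard]
    calc ∑ a : {a : Fˣ // a ^ d = 1}, ∑ b : V,
          (if a = (⟨1, one_pow d⟩ : {a : Fˣ // a ^ d = 1}) then
            (if b = 0 then ((Fintype.card F : ℕ) : ℚ) - 1 else -1) else 0)
        = ∑ a : {a : Fˣ // a ^ d = 1},
          (if a = (⟨1, one_pow d⟩ : {a : Fˣ // a ^ d = 1}) then
            ∑ b : V, (if b = 0 then ((Fintype.card F : ℕ) : ℚ) - 1 else -1) else 0) := by
          apply Finset.sum_congr rfl
          intro a _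
          split_ifs <;> simp
      _ = ((Fintype.card F : ℕ) : ℚ) - p ^ k := by rw [Finset.sum_ite_eq' Finset.univ, if_pos (Finset.mem_univ _), hS]
  -- final arithmetic
  have hqn : ((Fintype.card F : ℕ) : ℚ) = (p : ℚ) ^ (n - k) * (p : ℚ) ^ k := by
    rw [hF]
    push_cast
    rw [← pow_add, Nat.sub_add_cancel hkn]
  rw [hsum, hcard, hqn]
  have hp0 : ((p : ℚ)) ^ k ≠ 0 := pow_ne_zero _ (by exact_mod_cast hp.pos.ne')
  have hd0' : (d : ℚ) ≠ 0 := by exact_mod_cast hd0.ne'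
  push_cast
  field_simp
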